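/- Let a, c < 0 and let (f_n, g_n) be a sequence in H¹(ℝ)² with ‖f_n‖₂² + ‖g_n‖₂² = μ and τ(f_n,g_n) → m(μ). If sup_{y∈ℝ} ∫_{y-t}^{y+t}(f_n² + g_n²) → 0 as n → ∞ for every t > 0, then m(μ) ≥ -2μ. -/

import Mathlib

open MeasureTheory Real Filter


private lemma my_sqrt_add_le (u v : ℝ) (hu : 0 ≤ u) (hv : 0 ≤ v) :
    Real.sqrt (u + v) ≤ Real.sqrt u + Real.sqrt v := by
  have h : u + v ≤ (Real.sqrt u + Real.sqrt v) ^ 2 := by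
    nlinarith [Real.sq_sqrt hu, Real.sq_sqrt hv, Real.sqrt_nonneg u, Real.sqrt_nonneg v]
  calc Real.sqrt (u + v) ≤ Real.sqrt ((Real.sqrt u + Real.sqrt v) ^ 2) := Real.sqrt_le_sqrt h
    _ = Real.sqrt u + Real.sqrt v := Real.sqrt_sq (by positivity)

set_option maxHeartbeats 1000000 in
/-- Ruling out vanishing: if `(f_n, g_n)` is a sequence in `X_μ` with
`τ(f_n,g_n) → m(μ)` and the concentration functions vanish, i.e.
`sup_y ∫_{y-t}^{y+t} (f_n² + g_n²) → 0` for every `t > 0`, then `m(μ) ≥ -2μ`. -/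
theorem stmt7 (a c μ M : ℝ) (ha : a < 0) (hc : c < 0) (hμ : 0 < μ)
    (f g f' g' : ℕ → ℝ → ℝ)
    (hf : ∀ n x, HasDerivAt (f n) (f' n x) x)
    (hg : ∀ n x, HasDerivAt (g n) (g' n x) x)
    (hif2 : ∀ n, Integrable (fun x => (f n x) ^ 2))
    (hif'2 : ∀ n, Integrable (fun x => (f' n x) ^ 2))
    (hig2 : ∀ n, Integrable (fun x => (g n x) ^ 2))
    (hig'2 : ∀ n, Integrable (fun x => (g' n x) ^ 2))
    (hif2g : ∀ n, Integrable (fun x => (f n x) ^ 2 * g n x))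
    (hifg : ∀ n, Integrable (fun x => f n x * g n x))
    (hconstraint : ∀ n, (∫ x, (f n x) ^ 2) + (∫ x, (g n x) ^ 2) = μ)
    (hmin : Tendsto (fun n =>
        -a * (∫ x, (f' n x) ^ 2) - c * (∫ x, (g' n x) ^ 2)
          + (∫ x, (f n x) ^ 2 * g n x) + 2 * (∫ x, f n x * g n x))
      atTop (nhds M))
    (hvanish : ∀ t : ℝ, 0 < t →
      Tendsto (fun n => ⨆ y : ℝ, ∫ x in y - t..y + t, (f n x) ^ 2 + (g n x) ^ 2)
        atTop (nhds 0)) :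
    M ≥ -2 * μ := by
  have hna : (0:ℝ) < -a := by linarith
  set s : ℝ := μ / (16 * -a) with hs_def
  have hs : 0 < s := by positivity
  have hcontf : ∀ n, Continuous (f n) :=
    fun n => continuous_iff_continuousAt.2 fun x => (hf n x).continuousAt
  have hcontg : ∀ n, Continuous (g n) :=
    fun n => continuous_iff_continuousAt.2 fun x => (hg n x).continuousAt
  have hf'meas : ∀ n, Measurable (f' n) := by
    intro n
    have h : f' n = deriv (f n) := funext fun x => ((hf n x).deriv).symm
    rw [h]; exact measurable_deriv _
  have hPnonneg : ∀ n, 0 ≤ ∫ x, (f' n x) ^ 2 :=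
    fun n => integral_nonneg fun x => sq_nonneg _
  set Qfun : ℕ → ℝ := fun n => ⨆ y : ℝ, ∫ x in (y - 1)..(y + 1), (f n x) ^ 2 + (g n x) ^ 2
    with hQfun_def
  have hQle : ∀ n (y : ℝ), (∫ x in (y - 1)..(y + 1), (f n x) ^ 2 + (g n x) ^ 2) ≤ μ := by
    intro n y
    rw [intervalIntegral.integral_of_le (by linarith)]
    calc ∫ x in Set.Ioc (y-1) (y+1), ((f n x) ^ 2 + (g n x) ^ 2)
        ≤ ∫ x, ((f n x) ^ 2 + (g n x) ^ 2) :=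
          setIntegral_le_integral ((hif2 n).add (hig2 n))
            (Eventually.of_forall fun x => by positivity)
      _ = μ := by rw [integral_add (hif2 n) (hig2 n)]; exact hconstraint n
  have hQbdd : ∀ n, BddAbove (Set.range fun y : ℝ =>
      ∫ x in (y - 1)..(y + 1), (f n x) ^ 2 + (g n x) ^ 2) :=
    fun n => ⟨μ, by rintro _ ⟨y, rfl⟩; exact hQle n y⟩
  have hQnonneg : ∀ n, 0 ≤ Qfun n := by
    intro n
    have h0 : (0:ℝ) ≤ ∫ x in ((0:ℝ) - 1)..((0:ℝ) + 1), (f n x) ^ 2 + (g n x) ^ 2 :=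
      intervalIntegral.integral_nonneg (by norm_num) fun x _ => by positivity
    exact h0.trans (le_ciSup (hQbdd n) 0)
  have hIf2 : ∀ n (x : ℝ), (∫ t in (x - 1)..(x + 1), (f n t) ^ 2) ≤ Qfun n := by
    intro n x
    have h1 : (∫ t in (x - 1)..(x + 1), (f n t) ^ 2)
        ≤ ∫ t in (x - 1)..(x + 1), ((f n t) ^ 2 + (g n t) ^ 2) := by
      apply intervalIntegral.integral_mono_on (by linarith)
      · exact ((hcontf n).pow 2).intervalIntegrable _ _
      · exact (((hcontf n).pow 2).add ((hcontg n).pow 2)).intervalIntegrable _ _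
      · intro t _; nlinarith [sq_nonneg (g n t)]
    exact h1.trans (le_ciSup (hQbdd n) x)
  have hIf'2 : ∀ n (x : ℝ), (∫ t in Set.Icc (x - 1) (x + 1), (f' n t) ^ 2)
      ≤ ∫ t, (f' n t) ^ 2 := by
    intro n x
    exact setIntegral_le_integral (hif'2 n) (Eventually.of_forall fun t => sq_nonneg _)
  -- key pointwise bound
  have hkey : ∀ n (x : ℝ), (f n x) ^ 2 ≤ (1/2 + s) * Qfun n + (∫ t, (f' n t) ^ 2) / s := by
    intro n x
    obtain ⟨z, hzmem, hzmin⟩ := (isCompact_Icc (a := x - 1) (b := x + 1)).exists_isMinOn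
      (Set.nonempty_Icc.2 (by linarith)) (((hcontf n).pow 2).continuousOn)
    have hz1 : 2 * (f n z) ^ 2 ≤ ∫ t in (x - 1)..(x + 1), (f n t) ^ 2 := by
      have h : (∫ _ in (x - 1)..(x + 1), (f n z) ^ 2) ≤ ∫ t in (x - 1)..(x + 1), (f n t) ^ 2 :=
        intervalIntegral.integral_mono_on (by linarith) intervalIntegrable_const
          (((hcontf n).pow 2).intervalIntegrable _ _) (fun t ht => hzmin ht)
      rw [intervalIntegral.integral_const, smul_eq_mul] at h
      calc 2 * (f n z) ^ 2 = (x + 1 - (x - 1)) * (f n z) ^ 2 := by ring_nf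
        _ ≤ _ := h
    have hderiv : ∀ t : ℝ, HasDerivAt (fun y => (f n y) ^ 2) (2 * f n t * f' n t) t := by
      intro t
      have h := (hf n t).fun_pow 2
      refine h.congr_deriv ?_
      push_cast
      norm_num
    have huIcc : Set.uIcc z x ⊆ Set.Icc (x - 1) (x + 1) := by
      apply Set.uIcc_subset_Icc hzmem
      constructor <;> linarith
    have hmeas2 : Measurable fun t => 2 * f n t * f' n t :=
      ((measurable_const.mul (hcontf n).measurable).mul (hf'meas n))
    have hbound : IntegrableOn (fun t => (f n t) ^ 2 + (f' n t) ^ 2)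
        (Set.Icc (x - 1) (x + 1)) volume :=
      (((hcontf n).pow 2).continuousOn.integrableOn_compact isCompact_Icc).add ((hif'2 n).integrableOn)
    have hIH : IntegrableOn (fun t => 2 * f n t * f' n t) (Set.Icc (x - 1) (x + 1)) volume := by
      apply hbound.mono' hmeas2.aestronglyMeasurable
      refine Eventually.of_forall fun t => ?_
      have : ‖2 * f n t * f' n t‖ = 2 * |f n t| * |f' n t| := by
        rw [norm_mul, norm_mul]; simp [abs_of_nonneg]
      rw [this]
      nlinarith [sq_nonneg (|f n t| - |f' n t|), sq_abs (f n t), sq_abs (f' n t)]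
    have hFTC : (f n x) ^ 2 - (f n z) ^ 2 = ∫ t in z..x, 2 * f n t * f' n t := by
      rw [intervalIntegral.integral_eq_sub_of_hasDerivAt (fun t _ => hderiv t)
        ((hIH.mono_set huIcc).intervalIntegrable)]
    have habs : (∫ t in z..x, 2 * f n t * f' n t)
        ≤ ∫ t in Set.Icc (x - 1) (x + 1), |2 * f n t * f' n t| := by
      have h1 : (∫ t in z..x, 2 * f n t * f' n t)
          ≤ ∫ t in Set.uIoc z x, ‖2 * f n t * f' n t‖ := by
        refine (le_abs_self _).trans ?_
        rw [← Real.norm_eq_abs]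
        exact intervalIntegral.norm_integral_le_integral_norm_uIoc
      refine h1.trans ?_
      have hsub : Set.uIoc z x ⊆ Set.Icc (x - 1) (x + 1) :=
        (Set.uIoc_subset_uIcc).trans huIcc
      simp only [Real.norm_eq_abs]
      apply setIntegral_mono_set hIH.abs
        (Eventually.of_forall fun t => abs_nonneg _) (HasSubset.Subset.eventuallyLE hsub)
    have hCS : (∫ t in Set.Icc (x - 1) (x + 1), |2 * f n t * f' n t|)
        ≤ s * (∫ t in Set.Icc (x - 1) (x + 1), (f n t) ^ 2)
          + (1/s) * ∫ t in Set.Icc (x - 1) (x + 1), (f' n t) ^ 2 := by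
      have hpt : ∀ t : ℝ, |2 * f n t * f' n t| ≤ s * (f n t) ^ 2 + (1/s) * (f' n t) ^ 2 := by
        intro t
        have h1 : |2 * f n t * f' n t| = 2 * |f n t| * |f' n t| := by
          rw [abs_mul, abs_mul]; simp [abs_of_nonneg]
        rw [h1]
        have hs0 : s ≠ 0 := ne_of_gt hs
        have e : ∀ F F' : ℝ, s * F ^ 2 + (1/s) * F' ^ 2 - 2 * F * F'
            = (1/s) * (s * F - F') ^ 2 := by
          intro F F'
          field_simp
          ring
        have e2 := e |f n t| |f' n t|
        rw [sq_abs, sq_abs] at e2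
        have hnn : 0 ≤ (1/s) * (s * |f n t| - |f' n t|) ^ 2 := by positivity
        linarith
      have hint1 : IntegrableOn (fun t => (f n t) ^ 2) (Set.Icc (x - 1) (x + 1)) volume :=
        ((hcontf n).pow 2).continuousOn.integrableOn_compact isCompact_Icc
      have hint2 : IntegrableOn (fun t => (f' n t) ^ 2) (Set.Icc (x - 1) (x + 1)) volume :=
        (hif'2 n).integrableOn
      calc (∫ t in Set.Icc (x - 1) (x + 1), |2 * f n t * f' n t|)
          ≤ ∫ t in Set.Icc (x - 1) (x + 1),
              (s * (f n t) ^ 2 + (1/s) * (f' n t) ^ 2) := by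
            apply integral_mono hIH.abs ((hint1.const_mul s).add (hint2.const_mul (1/s)))
            exact fun t => hpt t
        _ = s * (∫ t in Set.Icc (x - 1) (x + 1), (f n t) ^ 2)
              + (1/s) * ∫ t in Set.Icc (x - 1) (x + 1), (f' n t) ^ 2 := by
            rw [integral_add (hint1.const_mul s) (hint2.const_mul (1/s)),
              integral_const_mul, integral_const_mul]
    have hIcc_eq : (∫ t in Set.Icc (x - 1) (x + 1), (f n t) ^ 2)
        = ∫ t in (x - 1)..(x + 1), (f n t) ^ 2 := by
      rw [intervalIntegral.integral_of_le (by linarith), integral_Icc_eq_integral_Ioc]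
    have hstep : (f n x) ^ 2 ≤ (f n z) ^ 2 + s * Qfun n + (1/s) * ∫ t, (f' n t) ^ 2 := by
      have h2 : s * (∫ t in Set.Icc (x - 1) (x + 1), (f n t) ^ 2) ≤ s * Qfun n := by
        apply mul_le_mul_of_nonneg_left _ hs.le
        rw [hIcc_eq]; exact hIf2 n x
      have h3 : (1/s) * (∫ t in Set.Icc (x - 1) (x + 1), (f' n t) ^ 2)
          ≤ (1/s) * ∫ t, (f' n t) ^ 2 :=
        mul_le_mul_of_nonneg_left (hIf'2 n x) (by positivity)
      nlinarith [hFTC, habs, hCS]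
    have h4 : (f n z) ^ 2 ≤ Qfun n / 2 := by
      have := (hz1.trans (hIf2 n x)); linarith
    have h5 : (1/s) * (∫ t, (f' n t) ^ 2) = (∫ t, (f' n t) ^ 2) / s := by ring
    nlinarith [hstep]
  -- bound on the cubic term
  have hCn : ∀ n, -(Real.sqrt ((1/2 + s) * Qfun n + (∫ t, (f' n t) ^ 2) / s) * (μ/2))
      ≤ ∫ x, (f n x) ^ 2 * g n x := by
    intro n
    set S := Real.sqrt ((1/2 + s) * Qfun n + (∫ t, (f' n t) ^ 2) / s) with hS_def
    have hSnn : 0 ≤ S := Real.sqrt_nonneg _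
    have habsf : ∀ x, |f n x| ≤ S := by
      intro x
      rw [← Real.sqrt_sq_eq_abs]
      exact Real.sqrt_le_sqrt (hkey n x)
    have h1 : |∫ x, (f n x) ^ 2 * g n x| ≤ ∫ x, |(f n x) ^ 2 * g n x| := by
      simpa only [Real.norm_eq_abs] using
        norm_integral_le_integral_norm (μ := volume) (fun x => (f n x) ^ 2 * g n x)
    have h2 : (∫ x, |(f n x) ^ 2 * g n x|) ≤ ∫ x, S * |f n x * g n x| := by
      apply integral_mono (hif2g n).abs ((hifg n).abs.const_mul S)
      intro x
      show |(f n x) ^ 2 * g n x| ≤ S * |f n x * g n x|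
      calc |(f n x) ^ 2 * g n x| = |f n x| * (|f n x| * |g n x|) := by
            rw [abs_mul, abs_pow]; ring
        _ ≤ S * (|f n x| * |g n x|) :=
            mul_le_mul_of_nonneg_right (habsf x) (by positivity)
        _ = S * |f n x * g n x| := by rw [abs_mul]
    have h3 : (∫ x, |f n x * g n x|) ≤ μ / 2 := by
      have hpt : ∀ x : ℝ, |f n x * g n x| ≤ (1/2) * ((f n x) ^ 2 + (g n x) ^ 2) := by
        intro x
        rw [abs_mul]
        nlinarith [sq_nonneg (|f n x| - |g n x|), sq_abs (f n x), sq_abs (g n x)]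
      calc (∫ x, |f n x * g n x|)
          ≤ ∫ x, (1/2) * ((f n x) ^ 2 + (g n x) ^ 2) :=
            integral_mono (hifg n).abs (((hif2 n).add (hig2 n)).const_mul _) hpt
        _ = (1/2) * ((∫ x, (f n x) ^ 2) + ∫ x, (g n x) ^ 2) := by
            rw [integral_const_mul, integral_add (hif2 n) (hig2 n)]
        _ = μ / 2 := by rw [hconstraint n]; ring
    have h4 : (∫ x, S * |f n x * g n x|) = S * ∫ x, |f n x * g n x| := integral_const_mul _ _
    have h5 : S * (∫ x, |f n x * g n x|) ≤ S * (μ/2) := mul_le_mul_of_nonneg_left h3 hSnn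
    have h6 : -(∫ x, (f n x) ^ 2 * g n x) ≤ |∫ x, (f n x) ^ 2 * g n x| := neg_le_abs _
    linarith
  have hDn : ∀ n, -μ ≤ 2 * ∫ x, f n x * g n x := by
    intro n
    have h : (∫ x, -((f n x) ^ 2 + (g n x) ^ 2)) ≤ ∫ x, 2 * (f n x * g n x) :=
      integral_mono ((hif2 n).add (hig2 n)).neg ((hifg n).const_mul 2)
        (fun x => by nlinarith [sq_nonneg (f n x + g n x)])
    rw [integral_neg, integral_add (hif2 n) (hig2 n), hconstraint n,
      integral_const_mul] at h
    linarith
  have hBn : ∀ n, 0 ≤ -c * ∫ x, (g' n x) ^ 2 :=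
    fun n => mul_nonneg (by linarith) (integral_nonneg fun x => sq_nonneg _)
  -- main lower bound
  have hmain : ∀ n, -2 * μ ≤ (-a * (∫ x, (f' n x) ^ 2) - c * (∫ x, (g' n x) ^ 2)
      + (∫ x, (f n x) ^ 2 * g n x) + 2 * (∫ x, f n x * g n x))
      + (μ/2) * Real.sqrt ((1/2 + s) * Qfun n) := by
    intro n
    set P := ∫ x, (f' n x) ^ 2 with hP_def
    have hP0 : 0 ≤ P := hPnonneg n
    have h1 : Real.sqrt ((1/2 + s) * Qfun n + P / s)
        ≤ Real.sqrt ((1/2 + s) * Qfun n) + Real.sqrt (P / s) :=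
      my_sqrt_add_le _ _ (mul_nonneg (by positivity) (hQnonneg n)) (div_nonneg hP0 hs.le)
    have h2 : (μ/2) * Real.sqrt (P / s) ≤ -a * P + μ := by
      set w := Real.sqrt (P / s) with hw_def
      have hw0 : 0 ≤ w := Real.sqrt_nonneg _
      have hsq : w ^ 2 = P / s := Real.sq_sqrt (div_nonneg hP0 hs.le)
      have hPw : P = s * w ^ 2 := by rw [hsq]; field_simp
      have has : -a * s = μ / 16 := by
        have ha0 : a ≠ 0 := ne_of_lt ha
        rw [hs_def]
        field_simp
      rw [hPw]
      have : -a * (s * w ^ 2) = (μ/16) * w ^ 2 := by rw [← has]; ring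
      rw [this]
      nlinarith [sq_nonneg (w - 4), hμ]
    have hC := hCn n
    have hD := hDn n
    have hB := hBn n
    have h1' := mul_le_mul_of_nonneg_right h1 (by linarith : (0:ℝ) ≤ μ/2)
    have hexp : (Real.sqrt ((1/2 + s) * Qfun n) + Real.sqrt (P / s)) * (μ/2)
        = Real.sqrt ((1/2 + s) * Qfun n) * (μ/2) + Real.sqrt (P / s) * (μ/2) := by ring
    rw [hexp] at h1'
    linarith
  -- pass to the limit
  have hQtend : Tendsto Qfun atTop (nhds 0) := hvanish 1 one_pos
  have hsqrtQ : Tendsto (fun n => (μ/2) * Real.sqrt ((1/2 + s) * Qfun n)) atTop (nhds 0) := by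
    have hcont : Continuous fun x : ℝ => (μ/2) * Real.sqrt ((1/2 + s) * x) := by
      exact continuous_const.mul (Real.continuous_sqrt.comp (continuous_const.mul continuous_id))
    have h0 := (hcont.tendsto 0).comp hQtend
    simpa [Function.comp_def] using h0
  have hlim := hmin.add hsqrtQ
  rw [add_zero] at hlim
  exact ge_of_tendsto' hlim hmain
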